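/- Let n ≥ 3 and m be integers with gcd(n−1, m) = 1. Let [E] : ℤ² → ℤ² be the group endomorphism [E](x, y) = (n·x, m·x + n·y). Then the cokernel ℤ²/(id − [E])(ℤ²) is isomorphic as an abelian group to ℤ/(n−1)²ℤ. -/
import Mathlib


/-- The endomorphism of `ℤ²` given by tensoring with the bundle `E` of class `n + mλ`:
`[E](x, y) = (n·x, m·x + n·y)`. -/
noncomputable def tensorE (n m : ℤ) : (ℤ × ℤ) →+ (ℤ × ℤ) :=
  AddMonoidHom.mk' (fun p => (n * p.1, m * p.1 + n * p.2)) (by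
    intro p q
    simp only [Prod.fst_add, Prod.snd_add, Prod.mk_add_mk, Prod.mk.injEq]
    constructor <;> ring)

/-- for integers `n ≥ 3` and `m` with `gcd(n-1, m) = 1`, the cokernel
`ℤ² / (id - [E])(ℤ²)` is isomorphic to `ℤ/(n-1)²ℤ`. -/
theorem stmt0 (n m : ℤ) (hn : 3 ≤ n) (hgcd : Int.gcd (n - 1) m = 1) :
    Nonempty (((ℤ × ℤ) ⧸ (AddMonoidHom.id (ℤ × ℤ) - tensorE n m).range) ≃+
      ZMod (((n - 1) ^ 2).toNat)) := by
  set d : ℤ := n - 1 with hd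
  set N : ℕ := ((n - 1) ^ 2).toNat with hN
  have hdpos : 0 < d := by omega
  have hNZ : (N : ℤ) = d ^ 2 := by
    rw [hN, Int.toNat_of_nonneg (by positivity)]
  have hco : IsCoprime d m := Int.isCoprime_iff_gcd_eq_one.mpr hgcd
  -- the homomorphism
  let φ : (ℤ × ℤ) →+ ZMod N := AddMonoidHom.mk'
    (fun p => ((m * p.1 - d * p.2 : ℤ) : ZMod N))
    (by
      intro p q
      simp only [Prod.fst_add, Prod.snd_add]
      push_cast
      ring)
  have hφ : ∀ p : ℤ × ℤ, φ p = ((m * p.1 - d * p.2 : ℤ) : ZMod N) := fun _ => rfl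
  -- surjectivity
  have hsurj : Function.Surjective φ := by
    obtain ⟨a, b, hab⟩ := hco
    intro t
    obtain ⟨s, rfl⟩ := ZMod.intCast_surjective t
    refine ⟨(b * s, -(a * s)), ?_⟩
    rw [hφ]
    congr 1
    have : m * (b * s) - d * -(a * s) = (a * d + b * m) * s := by ring
    rw [this, hab, one_mul]
  -- the range hom computed
  have hrange : ∀ p : ℤ × ℤ, (AddMonoidHom.id (ℤ × ℤ) - tensorE n m) p
      = (-(d * p.1), -(m * p.1) - d * p.2) := by
    intro p
    simp only [AddMonoidHom.sub_apply, AddMonoidHom.id_apply, tensorE, AddMonoidHom.mk'_apply]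
    rw [Prod.ext_iff]
    constructor <;> (simp only [Prod.fst_sub, Prod.snd_sub]; rw [hd]; ring)
  -- kernel = range
  have hker : (AddMonoidHom.id (ℤ × ℤ) - tensorE n m).range = φ.ker := by
    ext p
    obtain ⟨x, y⟩ := p
    constructor
    · rintro ⟨q, hq⟩
      rw [hrange] at hq
      rw [AddMonoidHom.mem_ker, hφ, ← hq]
      have : m * (-(d * q.1)) - d * (-(m * q.1) - d * q.2) = d ^ 2 * q.2 := by ring
      rw [this, ZMod.intCast_zmod_eq_zero_iff_dvd, hNZ]
      exact dvd_mul_right _ _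
    · intro hp
      rw [AddMonoidHom.mem_ker, hφ, ZMod.intCast_zmod_eq_zero_iff_dvd, hNZ] at hp
      obtain ⟨k, hk⟩ := hp
      have hdx : d ∣ m * x := ⟨d * k + y, by linarith [hk]⟩
      have hdx' : d ∣ x := (hco.dvd_of_dvd_mul_left hdx)
      obtain ⟨u, hu⟩ := hdx'
      have hd0 : d ≠ 0 := hdpos.ne'
      have h : m * (d * u) - d * y = d ^ 2 * k := by rw [← hu]; simpa using hk
      have hy : y = m * u - d * k := mul_left_cancel₀ hd0 (by linear_combination -h)
      refine ⟨(-u, k), ?_⟩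
      rw [hrange]
      simp only [Prod.mk.injEq]
      constructor
      · rw [hu]; ring
      · rw [hy]; ring
  exact ⟨(QuotientAddGroup.quotientAddEquivOfEq hker).trans
    (QuotientAddGroup.quotientKerEquivOfSurjective φ hsurj)⟩
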